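/- For the nonlocal perimeter with an integrable-at-infinity kernel, the localized perimeter is almost superadditive on disjoint open sets: if U_i are pairwise disjoint open subsets of ℝⁿ, then Per(E, ⋃_i U_i) ≤ Σ_i Per(E, U_i) ≤ Per(E, ⋃_i U_i) + Σ_i |E ∩ U_i| · φ(d_i), where d_i = min_{j≠i} dist(U_i, U_j) and φ(t) = ∫_{ℝⁿ\B_t(0)} K(h) dh. -/

import Mathlib

open MeasureTheory
open scoped ENNReal

/-- The localized nonlocal perimeter `Per(E, U)`. -/
noncomputable def nonlocalPerLoc {n : ℕ} (K : EuclideanSpace ℝ (Fin n) → ℝ≥0∞)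
    (E U : Set (EuclideanSpace ℝ (Fin n))) : ℝ≥0∞ :=
  (∫⁻ x in E ∩ U, ∫⁻ y in Eᶜ, K (x - y) ∂volume ∂volume) +
  (∫⁻ x in E \ U, ∫⁻ y in U \ E, K (x - y) ∂volume ∂volume)

/-- The tail mass of the kernel `φ(t) = ∫_{ℝⁿ \ B_t(0)} K(h) dh`. -/
noncomputable def kernelTail {n : ℕ} (K : EuclideanSpace ℝ (Fin n) → ℝ≥0∞)
    (t : ℝ) : ℝ≥0∞ :=
  ∫⁻ h in (Metric.ball (0 : EuclideanSpace ℝ (Fin n)) t)ᶜ, K h ∂volume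

/-- Almost superadditivity of the localized nonlocal perimeter on pairwise
disjoint open sets: `Per(E, ⋃ᵢ Uᵢ) ≤ Σᵢ Per(E, Uᵢ) ≤ Per(E, ⋃ᵢ Uᵢ) + Σᵢ |E ∩ Uᵢ| φ(dᵢ)`,
where `dᵢ` is (a lower bound for) the distance from `Uᵢ` to the other pieces. -/
theorem nonlocalPerLoc_almost_superadditive {n : ℕ}
    (K : EuclideanSpace ℝ (Fin n) → ℝ≥0∞) (hKmeas : Measurable K)
    (hKsymm : ∀ h, K (-h) = K h)
    (E : Set (EuclideanSpace ℝ (Fin n))) (hE : MeasurableSet E)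
    (U : ℕ → Set (EuclideanSpace ℝ (Fin n)))
    (hUopen : ∀ i, IsOpen (U i))
    (hUdisj : ∀ i j, i ≠ j → U i ∩ U j = ∅)
    (d : ℕ → ℝ) (hd : ∀ i, 0 < d i)
    (hdist : ∀ i j, i ≠ j → ∀ x ∈ U i, ∀ y ∈ U j, d i ≤ dist x y) :
    nonlocalPerLoc K E (⋃ i, U i) ≤ ∑' i : ℕ, nonlocalPerLoc K E (U i) ∧
    ∑' i : ℕ, nonlocalPerLoc K E (U i)
      ≤ nonlocalPerLoc K E (⋃ i, U i)
        + ∑' i : ℕ, volume (E ∩ U i) * kernelTail K (d i) := by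
  classical
  have hUm : ∀ i, MeasurableSet (U i) := fun i => (hUopen i).measurableSet
  have hpd : Pairwise (Function.onFun Disjoint U) := fun i j hij =>
    Set.disjoint_iff_inter_eq_empty.mpr (hUdisj i j hij)
  set W := ⋃ i, U i with hW
  have hWm : MeasurableSet W := MeasurableSet.iUnion hUm
  have hsubW : ∀ i, U i ⊆ W := fun i => hW ▸ Set.subset_iUnion U i
  -- measurability of the inner integral as a function of x
  have hmeasg : ∀ S : Set (EuclideanSpace ℝ (Fin n)),
      Measurable (fun x => ∫⁻ y in S, K (x - y) ∂volume) := fun S =>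
    Measurable.lintegral_prod_right (hKmeas.comp (measurable_fst.sub measurable_snd))
  -- lintegral over a disjoint union
  have hlU : ∀ (f : EuclideanSpace ℝ (Fin n) → ℝ≥0∞)
      (V : ℕ → Set (EuclideanSpace ℝ (Fin n))),
      (∀ i, MeasurableSet (V i)) → Pairwise (Function.onFun Disjoint V) →
      ∫⁻ x in ⋃ i, V i, f x ∂volume = ∑' i, ∫⁻ x in V i, f x ∂volume := by
    intro f V hVm hVd
    rw [Measure.restrict_iUnion hVd hVm, lintegral_sum_measure]
  -- change of variables for the tail
  have htail : ∀ (x : EuclideanSpace ℝ (Fin n)) (t : ℝ),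
      ∫⁻ y in (Metric.ball x t)ᶜ, K (x - y) ∂volume = kernelTail K t := by
    intro x t
    have hmp := Measure.measurePreserving_sub_left
      (volume : Measure (EuclideanSpace ℝ (Fin n))) x
    have hpre : (fun y => x - y) ⁻¹' (Metric.ball (0 : EuclideanSpace ℝ (Fin n)) t)ᶜ
        = (Metric.ball x t)ᶜ := by
      ext y
      simp only [Set.mem_preimage, Set.mem_compl_iff, Metric.mem_ball, dist_eq_norm, sub_zero]
      rw [norm_sub_rev]
    calc (∫⁻ y in (Metric.ball x t)ᶜ, K (x - y) ∂volume)
        = ∫⁻ y in (fun y => x - y) ⁻¹' (Metric.ball (0 : EuclideanSpace ℝ (Fin n)) t)ᶜ,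
            K (x - y) ∂volume := by rw [hpre]
      _ = ∫⁻ h in (Metric.ball (0 : EuclideanSpace ℝ (Fin n)) t)ᶜ, K h
            ∂(Measure.map (fun y => x - y) volume) :=
          (setLIntegral_map measurableSet_ball.compl hKmeas hmp.measurable).symm
      _ = kernelTail K t := by rw [hmp.map_eq, kernelTail]
  -- decomposition of the first term
  have hA : (∫⁻ x in E ∩ W, ∫⁻ y in Eᶜ, K (x - y) ∂volume ∂volume)
      = ∑' i, ∫⁻ x in E ∩ U i, ∫⁻ y in Eᶜ, K (x - y) ∂volume ∂volume := by
    rw [hW, Set.inter_iUnion]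
    exact hlU _ _ (fun i => hE.inter (hUm i))
      (hpd.mono fun i j h => h.mono Set.inter_subset_right Set.inter_subset_right)
  -- decomposition in the y variable
  have hYdec : ∀ x : EuclideanSpace ℝ (Fin n),
      ∫⁻ y in W \ E, K (x - y) ∂volume = ∑' i, ∫⁻ y in U i \ E, K (x - y) ∂volume := by
    intro x
    rw [hW, Set.iUnion_diff]
    exact hlU _ _ (fun i => (hUm i).diff hE)
      (hpd.mono fun i j h => h.mono Set.diff_subset Set.diff_subset)
  have hT : (∫⁻ x in E \ W, ∫⁻ y in W \ E, K (x - y) ∂volume ∂volume)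
      = ∑' i, ∫⁻ x in E \ W, ∫⁻ y in U i \ E, K (x - y) ∂volume ∂volume := by
    rw [lintegral_congr hYdec]
    exact lintegral_tsum fun i => (hmeasg _).aemeasurable
  -- splitting of E \ U i
  have hBsplit : ∀ i, (∫⁻ x in E \ U i, ∫⁻ y in U i \ E, K (x - y) ∂volume ∂volume)
      = (∫⁻ x in E \ W, ∫⁻ y in U i \ E, K (x - y) ∂volume ∂volume)
        + (∫⁻ x in E ∩ (W \ U i), ∫⁻ y in U i \ E, K (x - y) ∂volume ∂volume) := by
    intro i
    have hset : E \ U i = (E \ W) ∪ (E ∩ (W \ U i)) := by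
      ext x
      constructor
      · rintro ⟨hxE, hxU⟩
        by_cases hxW : x ∈ W
        · exact Or.inr ⟨hxE, hxW, hxU⟩
        · exact Or.inl ⟨hxE, hxW⟩
      · rintro (⟨hxE, hxW⟩ | ⟨hxE, hxW, hxU⟩)
        · exact ⟨hxE, fun h => hxW (hsubW i h)⟩
        · exact ⟨hxE, hxU⟩
    rw [hset, lintegral_union (hE.inter (hWm.diff (hUm i)))
      (Set.disjoint_left.mpr fun x hx h2 => hx.2 h2.2.1)]
  -- the key identity
  have hsum : ∑' i, nonlocalPerLoc K E (U i)
      = nonlocalPerLoc K E W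
        + ∑' i, ∫⁻ x in E ∩ (W \ U i), ∫⁻ y in U i \ E, K (x - y) ∂volume ∂volume := by
    have h1 : ∑' i, nonlocalPerLoc K E (U i)
        = ∑' i, ((∫⁻ x in E ∩ U i, ∫⁻ y in Eᶜ, K (x - y) ∂volume ∂volume)
            + ((∫⁻ x in E \ W, ∫⁻ y in U i \ E, K (x - y) ∂volume ∂volume)
              + (∫⁻ x in E ∩ (W \ U i), ∫⁻ y in U i \ E, K (x - y) ∂volume ∂volume))) := by
      refine tsum_congr fun i => ?_
      rw [nonlocalPerLoc, hBsplit i]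
    rw [h1, ENNReal.tsum_add, ENNReal.tsum_add, nonlocalPerLoc, hA, hT, add_assoc]
  -- the error terms
  have hCbound : (∑' i, ∫⁻ x in E ∩ (W \ U i), ∫⁻ y in U i \ E, K (x - y) ∂volume ∂volume)
      ≤ ∑' j, volume (E ∩ U j) * kernelTail K (d j) := by
    have hCdec : ∀ i, (∫⁻ x in E ∩ (W \ U i), ∫⁻ y in U i \ E, K (x - y) ∂volume ∂volume)
        = ∑' j, ∫⁻ x in E ∩ (U j \ U i), ∫⁻ y in U i \ E, K (x - y) ∂volume ∂volume := by
      intro i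
      have : E ∩ (W \ U i) = ⋃ j, E ∩ (U j \ U i) := by
        rw [hW, Set.iUnion_diff, Set.inter_iUnion]
      rw [this]
      exact hlU _ _ (fun j => hE.inter ((hUm j).diff (hUm i)))
        (hpd.mono fun a b h => h.mono
          (Set.inter_subset_right.trans Set.diff_subset)
          (Set.inter_subset_right.trans Set.diff_subset))
    calc (∑' i, ∫⁻ x in E ∩ (W \ U i), ∫⁻ y in U i \ E, K (x - y) ∂volume ∂volume)
        = ∑' i, ∑' j, ∫⁻ x in E ∩ (U j \ U i), ∫⁻ y in U i \ E,
            K (x - y) ∂volume ∂volume := tsum_congr hCdec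
      _ = ∑' j, ∑' i, ∫⁻ x in E ∩ (U j \ U i), ∫⁻ y in U i \ E,
            K (x - y) ∂volume ∂volume := ENNReal.tsum_comm
      _ ≤ ∑' j, volume (E ∩ U j) * kernelTail K (d j) := by
        refine ENNReal.tsum_le_tsum fun j => ?_
        -- first replace each term by the enlarged version
        have hDle : ∀ i, (∫⁻ x in E ∩ (U j \ U i), ∫⁻ y in U i \ E,
            K (x - y) ∂volume ∂volume)
            ≤ ∫⁻ x in E ∩ U j, ∫⁻ y in (U i \ U j) \ E, K (x - y) ∂volume ∂volume := by
          intro i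
          by_cases hij : i = j
          · subst hij
            simp
          · have h1 : U j \ U i = U j := ((hpd hij).symm).sdiff_eq_left
            have h2 : U i \ U j = U i := (hpd hij).sdiff_eq_left
            rw [h1, h2]
        calc (∑' i, ∫⁻ x in E ∩ (U j \ U i), ∫⁻ y in U i \ E, K (x - y) ∂volume ∂volume)
            ≤ ∑' i, ∫⁻ x in E ∩ U j, ∫⁻ y in (U i \ U j) \ E,
                K (x - y) ∂volume ∂volume := ENNReal.tsum_le_tsum hDle
          _ = ∫⁻ x in E ∩ U j, ∑' i, ∫⁻ y in (U i \ U j) \ E,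
                K (x - y) ∂volume ∂volume :=
              (lintegral_tsum fun i => (hmeasg _).aemeasurable).symm
          _ = ∫⁻ x in E ∩ U j, ∫⁻ y in (W \ U j) \ E, K (x - y) ∂volume ∂volume := by
              refine lintegral_congr fun x => ?_
              have hset : (W \ U j) \ E = ⋃ i, (U i \ U j) \ E := by
                rw [hW, Set.iUnion_diff, Set.iUnion_diff]
              rw [hset]
              exact (hlU _ _ (fun i => ((hUm i).diff (hUm j)).diff hE)
                (hpd.mono fun a b h => h.mono
                  (Set.diff_subset.trans Set.diff_subset)
                  (Set.diff_subset.trans Set.diff_subset))).symm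
          _ ≤ ∫⁻ _x in E ∩ U j, kernelTail K (d j) ∂volume := by
              refine setLIntegral_mono' (hE.inter (hUm j)) fun x hx => ?_
              have hsub : (W \ U j) \ E ⊆ (Metric.ball x (d j))ᶜ := by
                intro y hy
                obtain ⟨⟨hyW, hyUj⟩, -⟩ := hy
                obtain ⟨i, hyUi⟩ := Set.mem_iUnion.mp (hW ▸ hyW)
                have hij : j ≠ i := fun h => hyUj (h ▸ hyUi)
                have hdy : d j ≤ dist x y := hdist j i hij x hx.2 y hyUi
                simp only [Set.mem_compl_iff, Metric.mem_ball]
                rw [dist_comm]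
                exact not_lt.mpr hdy
              calc (∫⁻ y in (W \ U j) \ E, K (x - y) ∂volume)
                  ≤ ∫⁻ y in (Metric.ball x (d j))ᶜ, K (x - y) ∂volume :=
                    lintegral_mono_set hsub
                _ = kernelTail K (d j) := htail x (d j)
          _ = volume (E ∩ U j) * kernelTail K (d j) := by
              rw [setLIntegral_const, mul_comm]
  constructor
  · rw [hsum]
    exact le_self_add
  · rw [hsum]
    exact add_le_add_right hCbound _
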